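/- For n = 2k even, k ≥ 2, every nonzero root z of D(H_n, x) = Σ_{j=1}^{n−1} x^j + x^k satisfies 1/2 ≤ |z| ≤ 2. -/

import Mathlib

theorem antiregular_even_root_modulus (k : ℕ) (hk : 2 ≤ k) (z : ℂ) (hz0 : z ≠ 0)
    (hz : (∑ j ∈ Finset.Icc 1 (2 * k - 1), z ^ j) + z ^ k = 0) :
    1 / 2 ≤ ‖z‖ ∧ ‖z‖ ≤ 2 := by
  obtain ⟨m, rfl⟩ := Nat.exists_eq_add_of_le hk
  have h1 : ∑ j ∈ Finset.Icc 1 (2 * (2 + m) - 1), z ^ j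
      = ∑ j ∈ Finset.Ico 1 (2 * (2 + m)), z ^ j := by
    rw [← Finset.Ico_add_one_right_eq_Icc, show 2 * (2 + m) - 1 + 1 = 2 * (2 + m) from by omega]
  have h2 : ∑ j ∈ Finset.range (2 * (2 + m)), z ^ j
      = 1 + ∑ j ∈ Finset.Ico 1 (2 * (2 + m)), z ^ j := by
    rw [Finset.range_eq_Ico, ← Finset.sum_Ico_consecutive _ (by omega : 0 ≤ 1) (by omega)]
    simp
  rw [h1] at hz
  have hz' : (∑ j ∈ Finset.range (2 * (2 + m)), z ^ j) - 1 + z ^ (2 + m) = 0 := by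
    rw [h2]; linear_combination hz
  have hgeom := geom_sum_mul z (2 * (2 + m))
  have key : (z ^ (2 + m) - 1) * (z ^ (1 + m) + 1) * z = 0 := by
    have hh : ((∑ j ∈ Finset.range (2 * (2 + m)), z ^ j) - 1 + z ^ (2 + m)) * (z - 1) = 0 := by
      rw [hz']; ring
    rw [add_mul, sub_mul, hgeom] at hh
    linear_combination hh
  rcases mul_eq_zero.mp key with h | h
  · rcases mul_eq_zero.mp h with h | h
    · have habs : ‖z‖ ^ (2 + m) = 1 := by
        rw [← norm_pow, sub_eq_zero.mp h, norm_one]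
      have : ‖z‖ = 1 := by
        rcases (pow_eq_one_iff_cases.mp habs) with h' | h' | h' <;>
          first
          | omega
          | exact h'
          | nlinarith [norm_nonneg z, h'.1]
      rw [this]; norm_num
    · have habs : ‖z‖ ^ (1 + m) = 1 := by
        have : z ^ (1 + m) = -1 := by linear_combination h
        rw [← norm_pow, this]; simp
      have : ‖z‖ = 1 := by
        rcases (pow_eq_one_iff_cases.mp habs) with h' | h' | h' <;>
          first
          | omega
          | exact h'
          | nlinarith [norm_nonneg z, h'.1]
      rw [this]; norm_num
  · exact absurd h hz0
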